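/- Let a = (a_1,...,a_k) be a composition of n with all parts positive. There exists a flattened Fubini ranking of length n with runs of (strict) ascents whose reduced content is a if and only if a_i ≤ i for all 1 ≤ i ≤ k. -/

import Mathlib

/-- A Fubini ranking of length `n`: entries in `{1,...,n}` and every value `v`
appearing satisfies `v = 1 + #{j : r_j < v}`. -/
def IsFubini (n : ℕ) (l : List ℕ) : Prop :=
  l.length = n ∧ (∀ x ∈ l, 1 ≤ x ∧ x ≤ n) ∧
    ∀ v ∈ l, v = 1 + l.countP (fun x => decide (x < v))

/-- Split a list (with given head) into maximal runs w.r.t. relation `R`. -/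
def runsAux (R : ℕ → ℕ → Bool) : ℕ → List ℕ → List (List ℕ)
  | a, [] => [[a]]
  | a, b :: l =>
    match runsAux R b l with
    | (c :: r) :: rest =>
        if R a b then (a :: c :: r) :: rest else [a] :: (c :: r) :: rest
    | rs => [a] :: rs

/-- The maximal runs of a list with respect to the relation `R`. -/
def runs (R : ℕ → ℕ → Bool) : List ℕ → List (List ℕ)
  | [] => []
  | a :: l => runsAux R a l

/-- Maximal runs of weak ascents. -/
def weakRuns (l : List ℕ) : List (List ℕ) := runs (fun a b => decide (a ≤ b)) l

/-- Maximal runs of strict ascents. -/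
def strictRuns (l : List ℕ) : List (List ℕ) := runs (fun a b => decide (a < b)) l

/-- Leading terms of a list of runs. -/
def leadingTerms (rs : List (List ℕ)) : List ℕ := rs.map List.headI

/-- Weakly flattened w.r.t. runs of weak ascents. -/
def WeaklyFlattenedWeak (l : List ℕ) : Prop :=
  (leadingTerms (weakRuns l)).Chain' (· ≤ ·)

/-- Flattened w.r.t. runs of weak ascents. -/
def FlattenedWeak (l : List ℕ) : Prop :=
  (leadingTerms (weakRuns l)).Chain' (· < ·)

/-- Weakly flattened w.r.t. runs of strict ascents. -/
def WeaklyFlattenedStrict (l : List ℕ) : Prop :=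
  (leadingTerms (strictRuns l)).Chain' (· ≤ ·)

/-- Flattened w.r.t. runs of strict ascents. -/
def FlattenedStrict (l : List ℕ) : Prop :=
  (leadingTerms (strictRuns l)).Chain' (· < ·)

/-- The content `(c_1, ..., c_n)` of a tuple of length `n`: `c_i` is the number
of entries equal to `i`. -/
def content (l : List ℕ) : List ℕ :=
  (List.range l.length).map (fun i => l.count (i + 1))

/-- The reduced content: multiplicities of the distinct values, in increasing
order of the values. -/
def reducedContent (l : List ℕ) : List ℕ :=
  (l.toFinset.sort (· ≤ ·)).map (fun v => l.count v)

/-- `a_1` copies of `1`, then `a_2` copies of `1 + a_1`, etc. (auxiliary). -/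
def stairsAux : ℕ → List ℕ → List ℕ
  | _, [] => []
  | s, c :: rest => List.replicate c (s + 1) ++ stairsAux (s + c) rest

/-- The weakly increasing tuple with reduced content `a`. -/
def stairs (a : List ℕ) : List ℕ := stairsAux 0 a

-- ============ generic runs lemmas ============

lemma runsAux_shape (R : ℕ → ℕ → Bool) (a : ℕ) (l : List ℕ) :
    ∃ r rest, runsAux R a l = (a :: r) :: rest := by
  induction l generalizing a with
  | nil => exact ⟨[], [], rfl⟩
  | cons b l ih =>
    obtain ⟨r, rest, h⟩ := ih b
    by_cases hR : R a b
    · exact ⟨b :: r, rest, by simp [runsAux, h, hR]⟩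
    · exact ⟨[], (b :: r) :: rest, by simp [runsAux, h, hR]⟩

lemma join_runsAux (R : ℕ → ℕ → Bool) (a : ℕ) (l : List ℕ) :
    (runsAux R a l).flatten = a :: l := by
  induction l generalizing a with
  | nil => rfl
  | cons b l ih =>
    obtain ⟨r, rest, h⟩ := runsAux_shape R b l
    have hj := ih b
    rw [h] at hj
    by_cases hR : R a b <;> simp_all [runsAux, h, hR]

def descents (R : ℕ → ℕ → Bool) : ℕ → List ℕ → List ℕ
  | _, [] => []
  | a, b :: l => if R a b then descents R b l else b :: descents R b l

lemma leadingTerms_runsAux (R : ℕ → ℕ → Bool) (a : ℕ) (l : List ℕ) :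
    leadingTerms (runsAux R a l) = a :: descents R a l := by
  induction l generalizing a with
  | nil => rfl
  | cons b l ih =>
    obtain ⟨r, rest, h⟩ := runsAux_shape R b l
    have hlt := ih b
    rw [h] at hlt
    by_cases hR : R a b <;>
      simp_all [runsAux, h, hR, leadingTerms, descents]

lemma runsAux_cons (R : ℕ → ℕ → Bool) (a b : ℕ) (l r : List ℕ) (rest : List (List ℕ))
    (h : runsAux R b l = (b :: r) :: rest) :
    runsAux R a (b :: l) =
      if R a b then (a :: b :: r) :: rest else [a] :: (b :: r) :: rest := by
  simp [runsAux, h]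

lemma runsAux_chains (R : ℕ → ℕ → Bool) (a : ℕ) (l : List ℕ) :
    ∀ B ∈ runsAux R a l, ∃ h t, B = h :: t ∧ List.Chain (fun p q => R p q = true) h t := by
  induction l generalizing a with
  | nil => intro B hB; simp [runsAux] at hB; exact ⟨a, [], hB, List.Chain.nil⟩
  | cons b l ih =>
    obtain ⟨r, rest, h⟩ := runsAux_shape R b l
    intro B hB
    have hfirst := ih b ((b :: r)) (by rw [h]; exact List.mem_cons_self)
    obtain ⟨h', t', he, hc⟩ := hfirst
    have hbr : List.Chain (fun p q => R p q = true) b r := by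
      injection he with he1 he2
      subst he1; subst he2; exact hc
    rw [runsAux_cons R a b l r rest h] at hB
    by_cases hR : R a b
    · rw [if_pos hR] at hB
      rcases List.mem_cons.mp hB with rfl | hB
      · exact ⟨a, b :: r, rfl, List.Chain.cons hR hbr⟩
      · exact ih b B (by rw [h]; exact List.mem_cons_of_mem _ hB)
    · rw [if_neg hR] at hB
      rcases List.mem_cons.mp hB with rfl | hB
      · exact ⟨a, [], rfl, List.Chain.nil⟩
      · exact ih b B (by rw [h]; exact hB)

lemma descents_chain_append (R : ℕ → ℕ → Bool) (a : ℕ) (l1 l2 : List ℕ)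
    (h : List.Chain (fun p q => R p q = true) a l1) :
    descents R a (l1 ++ l2) = descents R ((a :: l1).getLast (by simp)) l2 := by
  induction l1 generalizing a with
  | nil => simp
  | cons b l1 ih =>
    cases h with
    | cons_cons hab h' =>
      simp only [List.cons_append, descents, hab, if_true, List.append_eq]
      rw [ih b h']
      congr 1

lemma descents_join_sublist (R : ℕ → ℕ → Bool) (bs : List (List ℕ)) (x : ℕ)
    (hb : ∀ B ∈ bs, ∃ h t, B = h :: t ∧ List.Chain (fun p q => R p q = true) h t) :
    (descents R x bs.flatten).Sublist (bs.map List.headI) := by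
  induction bs generalizing x with
  | nil => simp [descents]
  | cons B rest ih =>
    obtain ⟨h, t, rfl, hc⟩ := hb _ (List.mem_cons_self)
    have hrest := fun B hB => hb B (List.mem_cons_of_mem _ hB)
    simp only [List.flatten_cons, List.cons_append, descents, List.append_eq]
    have key : descents R h (t ++ rest.flatten)
        = descents R ((h :: t).getLast (by simp)) rest.flatten :=
      descents_chain_append R h t rest.flatten hc
    by_cases hR : R x h
    · rw [if_pos hR, key]
      exact (ih _ hrest).cons _
    · rw [if_neg hR, key]
      simp only [List.map_cons, List.headI]
      exact (ih _ hrest).cons₂ _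

lemma flattenedStrict_flatten (bs : List (List ℕ))
    (hb : ∀ B ∈ bs, ∃ h t, B = h :: t ∧ List.Chain (fun p q => decide (p < q) = true) h t)
    (hh : (bs.map List.headI).Chain' (· < ·)) :
    FlattenedStrict bs.flatten := by
  cases bs with
  | nil => simp [FlattenedStrict, strictRuns, runs, leadingTerms, List.Chain']
  | cons B rest =>
    obtain ⟨h, t, rfl, hc⟩ := hb _ (List.mem_cons_self)
    have hrest := fun B hB => hb B (List.mem_cons_of_mem _ hB)
    unfold FlattenedStrict strictRuns
    simp only [List.flatten_cons, List.cons_append, runs]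
    rw [leadingTerms_runsAux]
    have key := descents_chain_append (fun a b => decide (a < b)) h t rest.flatten hc
    rw [key]
    have hsub := descents_join_sublist (fun a b => decide (a < b)) rest
      ((h :: t).getLast (by simp)) hrest
    have : (h :: descents (fun a b => decide (a < b)) ((h :: t).getLast (by simp))
        rest.flatten).Sublist (((h :: t) :: rest).map List.headI) := by
      simp only [List.map_cons, List.headI]
      exact hsub.cons₂ _
    exact hh.sublist this

lemma flatten_strictRuns (l : List ℕ) : (strictRuns l).flatten = l := by
  cases l with
  | nil => rfl
  | cons a l => exact join_runsAux _ a l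

lemma strictRuns_chains (l : List ℕ) :
    ∀ B ∈ strictRuns l, ∃ h t, B = h :: t ∧
      List.Chain (fun p q => decide (p < q) = true) h t := by
  cases l with
  | nil => intro B hB; simp [strictRuns, runs] at hB
  | cons a l => exact runsAux_chains _ a l

lemma chain_decide_lt {h : ℕ} {t : List ℕ} (hc : List.Chain (fun p q => decide (p < q) = true) h t) :
    List.Chain (· < ·) h t := by
  exact List.IsChain.imp (fun _ _ hab => by simpa using hab) hc

lemma sum_count_le_countP_mem (v : ℕ) (L : List (List ℕ))
    (h1 : ∀ B ∈ L, B.count v ≤ 1) :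
    (L.map (List.count v)).sum ≤ L.countP (fun B => decide (v ∈ B)) := by
  induction L with
  | nil => simp
  | cons B L ih =>
    simp only [List.map_cons, List.sum_cons, List.countP_cons]
    have hB := h1 B (List.mem_cons_self)
    have ihh := ih (fun B hB => h1 B (List.mem_cons_of_mem _ hB))
    by_cases hv : v ∈ B
    · have h2 : (if decide (v ∈ B) = true then 1 else 0) = 1 := by simp [hv]
      rw [h2]; omega
    · rw [List.count_eq_zero_of_not_mem hv]
      have h2 : (if decide (v ∈ B) = true then 1 else 0) = 0 := by simp [hv]
      rw [h2]; omega

-- key forward lemma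
lemma forward_dir (l : List ℕ) (hf : FlattenedStrict l) :
    ∀ i (h : i < (reducedContent l).length), (reducedContent l)[i] ≤ i + 1 := by
  intro i hil
  set V := l.toFinset.sort (· ≤ ·) with hV
  have hVlen : i < V.length := by simpa [reducedContent, hV] using hil
  have hgetl : (reducedContent l)[i] = l.count V[i] := by
    simp [reducedContent, hV]
  rw [hgetl]
  set v := V[i] with hv
  set rs := strictRuns l with hrs
  -- count v l = sum of counts over runs
  have hcount : l.count v = (rs.map (List.count v)).sum := by
    rw [← flatten_strictRuns l, List.count_flatten]
  have hchains := strictRuns_chains l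
  have hone : ∀ B ∈ rs, B.count v ≤ 1 := by
    intro B hB
    obtain ⟨h, t, rfl, hc⟩ := hchains B hB
    have hp : (h :: t).Pairwise (· < ·) := List.isChain_iff_pairwise.mp (chain_decide_lt hc)
    exact List.nodup_iff_count_le_one.mp (hp.imp (fun hlt => ne_of_lt hlt)) v
  have hle1 : l.count v ≤ rs.countP (fun B => decide (v ∈ B)) := by
    rw [hcount]; exact sum_count_le_countP_mem v rs hone
  -- the runs containing v have distinct heads, each ≤ v and ∈ l
  set S := rs.filter (fun B => decide (v ∈ B)) with hS
  have hSlen : rs.countP (fun B => decide (v ∈ B)) = S.length :=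
    List.countP_eq_length_filter
  have hheads : (S.map List.headI).Sublist (rs.map List.headI) :=
    (List.filter_sublist).map _
  have hndheads : (S.map List.headI).Nodup := by
    have hp : (rs.map List.headI).Pairwise (· < ·) := List.isChain_iff_pairwise.mp hf
    exact List.Pairwise.sublist hheads (hp.imp fun hlt => ne_of_lt hlt)
  have hVp : V.Pairwise (· < ·) := (Finset.sortedLT_sort _).pairwise
  have hVnd : V.Nodup := hVp.imp (fun hlt => ne_of_lt hlt)
  -- every head is in the finset of values ≤ v
  have hmemF : ∀ x ∈ S.map List.headI, x ∈ l.toFinset.filter (fun y => y ≤ v) := by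
    intro x hx
    obtain ⟨B, hBS, rfl⟩ := List.mem_map.mp hx
    have hBrs : B ∈ rs := (List.mem_filter.mp hBS).1
    have hvB : v ∈ B := by simpa using (List.mem_filter.mp hBS).2
    obtain ⟨h, t, rfl, hc⟩ := hchains B hBrs
    have hp : (h :: t).Pairwise (· < ·) := List.isChain_iff_pairwise.mp (chain_decide_lt hc)
    have hhv : h ≤ v := by
      rcases List.mem_cons.mp hvB with rfl | hvB
      · exact le_refl _
      · exact le_of_lt (List.rel_of_pairwise_cons hp hvB)
    have hhl : List.headI (h :: t) ∈ l := by
      rw [← flatten_strictRuns l]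
      exact List.mem_flatten.mpr ⟨h :: t, hBrs, List.mem_cons_self⟩
    simp only [List.headI] at hhl ⊢
    exact Finset.mem_filter.mpr ⟨List.mem_toFinset.mpr hhl, hhv⟩
  have hSlen2 : S.length ≤ (l.toFinset.filter (fun y => y ≤ v)).card := by
    have h1 : (S.map List.headI).length = S.length := List.length_map _
    rw [← h1, ← List.toFinset_card_of_nodup hndheads]
    exact Finset.card_le_card (fun x hx => hmemF x (List.mem_toFinset.mp hx))
  -- card of the filtered finset is i+1
  have hVto : V.toFinset = l.toFinset := Finset.sort_toFinset _ _
  have hfilt : V.filter (fun y => decide (y ≤ v)) = V.take (i + 1) := by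
    conv_lhs => rw [← List.take_append_drop (i + 1) V]
    rw [List.filter_append]
    have h1 : (V.take (i + 1)).filter (fun y => decide (y ≤ v)) = V.take (i + 1) := by
      apply List.filter_eq_self.mpr
      intro x hx
      obtain ⟨j, hj, hxe⟩ := List.mem_iff_getElem.mp hx
      have hjlen : j < V.length := lt_of_lt_of_le hj (by simp [List.length_take])
      have hji : j ≤ i := by
        have := hj; rw [List.length_take] at this; omega
      have : x = V[j] := by rw [← hxe]; exact List.getElem_take
      subst this
      rcases eq_or_lt_of_le hji with rfl | hji'
      · simp [hv]
      · simpa using le_of_lt (List.pairwise_iff_getElem.mp hVp j i hjlen hVlen hji')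
    have h2 : (V.drop (i + 1)).filter (fun y => decide (y ≤ v)) = [] := by
      apply List.filter_eq_nil_iff.mpr
      intro x hx
      obtain ⟨j, hj, hxe⟩ := List.mem_iff_getElem.mp hx
      have hjlen : i + 1 + j < V.length := by
        rw [List.length_drop] at hj; omega
      have hxv : x = V[i + 1 + j] := by rw [← hxe]; exact List.getElem_drop
      have : V[i] < V[i + 1 + j] :=
        List.pairwise_iff_getElem.mp hVp i (i + 1 + j) hVlen hjlen (by omega)
      simp only [hxv, hv, decide_eq_true_eq]
      omega
    rw [h1, h2, List.append_nil]
  have hcard : (l.toFinset.filter (fun y => y ≤ v)).card = i + 1 := by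
    rw [← hVto]
    have hfe : Finset.filter (fun y => y ≤ v) V.toFinset
        = (V.filter (fun y => decide (y ≤ v))).toFinset := by
      rw [List.toFinset_filter]
      simp
    rw [hfe, List.toFinset_card_of_nodup (hVnd.filter _), hfilt, List.length_take]
    omega
  omega

-- ===================== construction =====================

def valsF (a : List ℕ) (j : ℕ) : ℕ := (∑ i ∈ Finset.range j, a.getD i 0) + 1

def col (a : List ℕ) (i : ℕ) : List ℕ :=
  valsF a i ::
    (((List.range a.length).filter
      (fun j => decide (i < j ∧ j < i + a.getD j 0))).map (valsF a))

def build (a : List ℕ) : List ℕ := ((List.range a.length).map (col a)).flatten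

lemma list_sum_range (n : ℕ) (f : ℕ → ℕ) :
    ((List.range n).map f).sum = ∑ i ∈ Finset.range n, f i := by
  induction n with
  | zero => simp
  | succ n ih => rw [List.range_succ, Finset.sum_range_succ, List.map_append]; simp [ih]

lemma count_map_eq_countP (v : ℕ) (f : ℕ → ℕ) (l : List ℕ) :
    (l.map f).count v = l.countP (fun x => decide (f x = v)) := by
  rw [List.count, List.countP_map]
  apply List.countP_congr; intro x _
  simp [Function.comp]

lemma countP_range_card (k : ℕ) (p : ℕ → Bool) :
    (List.range k).countP p = ((Finset.range k).filter (fun i => p i = true)).card := by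
  induction k with
  | zero => simp
  | succ k ih =>
    rw [List.range_succ, List.countP_append, Finset.range_add_one]
    by_cases h : p k = true
    · rw [Finset.filter_insert, if_pos h, Finset.card_insert_of_notMem (by simp)]
      simp [ih, h]
    · rw [Finset.filter_insert, if_neg h]
      simp [ih, h]

lemma sum_range_getD (a : List ℕ) :
    ∑ i ∈ Finset.range a.length, a.getD i 0 = a.sum := by
  induction a with
  | nil => simp
  | cons x a ih =>
    rw [List.length_cons, Finset.sum_range_succ']
    simp only [List.getD_cons_succ, List.getD_cons_zero, List.sum_cons]
    omega

lemma map_getD_range (a : List ℕ) :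
    (List.range a.length).map (fun j => a.getD j 0) = a := by
  apply List.ext_getElem
  · simp
  · intro i h1 h2
    simp only [List.getElem_map, List.getElem_range]
    rw [List.getD_eq_getElem _ _ (by simpa using h2)]

section Build

variable (a : List ℕ) (hpos : ∀ j, j < a.length → 0 < a.getD j 0)

include hpos

lemma valsF_lt {j j' : ℕ} (hj : j < a.length) (hjj : j < j') :
    valsF a j < valsF a j' := by
  unfold valsF
  have h1 : ∑ i ∈ Finset.range (j + 1), a.getD i 0 ≤ ∑ i ∈ Finset.range j', a.getD i 0 :=
    Finset.sum_le_sum_of_subset (Finset.range_subset_range.mpr (by omega))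
  rw [Finset.sum_range_succ] at h1
  have := hpos j hj
  omega

lemma valsF_lt_iff {j j' : ℕ} (hj : j ≤ a.length) (hj' : j' ≤ a.length) :
    valsF a j < valsF a j' ↔ j < j' := by
  constructor
  · intro h
    by_contra hc
    push_neg at hc
    rcases eq_or_lt_of_le hc with rfl | hlt
    · omega
    · exact absurd (valsF_lt a hpos (by omega) hlt) (by omega)
  · intro h
    exact valsF_lt a hpos (by omega) h

lemma valsF_inj {j j' : ℕ} (hj : j ≤ a.length) (hj' : j' ≤ a.length)
    (h : valsF a j = valsF a j') : j = j' := by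
  by_contra hc
  rcases Nat.lt_or_ge j j' with hlt | hge
  · exact absurd h (by have := valsF_lt a hpos (by omega) hlt; omega)
  · have hlt : j' < j := by omega
    exact absurd h (by have := valsF_lt a hpos (by omega) hlt; omega)

lemma mem_build {x : ℕ} : x ∈ build a ↔ ∃ j, j < a.length ∧ x = valsF a j := by
  unfold build
  rw [List.mem_flatten]
  constructor
  · rintro ⟨B, hB, hxB⟩
    obtain ⟨i, hi, rfl⟩ := List.mem_map.mp hB
    rw [List.mem_range] at hi
    rcases List.mem_cons.mp hxB with rfl | hx
    · exact ⟨i, hi, rfl⟩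
    · obtain ⟨j, hj, rfl⟩ := List.mem_map.mp hx
      have := List.mem_filter.mp hj
      rw [List.mem_range] at this
      exact ⟨j, this.1, rfl⟩
  · rintro ⟨j, hj, rfl⟩
    refine ⟨col a j, List.mem_map.mpr ⟨j, List.mem_range.mpr hj, rfl⟩, ?_⟩
    exact List.mem_cons_self

lemma count_col {i j : ℕ} (hi : i < a.length) (hj : j < a.length) :
    (col a i).count (valsF a j) = if i ≤ j ∧ j < i + a.getD j 0 then 1 else 0 := by
  unfold col
  rw [List.count_cons, count_map_eq_countP]
  have hcp : ((List.range a.length).filter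
      (fun j' => decide (i < j' ∧ j' < i + a.getD j' 0))).countP
        (fun x => decide (valsF a x = valsF a j))
      = ((List.range a.length).filter
      (fun j' => decide (i < j' ∧ j' < i + a.getD j' 0))).countP
        (fun x => decide (x = j)) := by
    apply List.countP_congr
    intro x hx
    have hxr : x < a.length := by
      have := (List.mem_filter.mp hx).1
      simpa using this
    simp only [decide_eq_true_eq]
    constructor
    · intro h; exact valsF_inj a hpos (le_of_lt hxr) (le_of_lt hj) h
    · rintro rfl; rfl
  rw [hcp, List.countP_filter]
  have hcp2 : (List.range a.length).countP
      (fun x => decide (x = j) && decide (i < x ∧ x < i + a.getD x 0))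
      = (List.range a.length).countP (fun x => decide (x = j ∧ i < j ∧ j < i + a.getD j 0)) := by
    apply List.countP_congr
    intro x _
    simp only [Bool.and_eq_true, decide_eq_true_eq]
    constructor
    · rintro ⟨rfl, h⟩; exact ⟨rfl, h⟩
    · rintro ⟨rfl, h⟩; exact ⟨rfl, h⟩
  rw [hcp2, countP_range_card]
  by_cases hij : i < j ∧ j < i + a.getD j 0
  · have hfe : (Finset.range a.length).filter
        (fun x => (decide (x = j ∧ i < j ∧ j < i + a.getD j 0)) = true) = {j} := by
      ext x
      simp only [Finset.mem_filter, Finset.mem_range, decide_eq_true_eq, Finset.mem_singleton]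
      constructor
      · rintro ⟨_, rfl, _⟩; rfl
      · rintro rfl; exact ⟨hj, rfl, hij⟩
    rw [hfe]
    have hne' : (valsF a i == valsF a j) = false := by
      apply beq_eq_false_iff_ne.mpr
      intro h
      have := valsF_inj a hpos (le_of_lt hi) (le_of_lt hj) h
      omega
    have hc2 : i ≤ j ∧ j < i + a.getD j 0 := ⟨le_of_lt hij.1, hij.2⟩
    rw [if_pos hc2]
    simp [hne']
  · have hfe : (Finset.range a.length).filter
        (fun x => (decide (x = j ∧ i < j ∧ j < i + a.getD j 0)) = true) = ∅ := by
      ext x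
      simp only [Finset.mem_filter, Finset.mem_range, decide_eq_true_eq,
        Finset.notMem_empty, iff_false]
      rintro ⟨_, rfl, h⟩
      exact hij h
    rw [hfe, Finset.card_empty]
    by_cases hij2 : i = j
    · subst hij2
      have := hpos i hi
      have hcond : i ≤ i ∧ i < i + a.getD i 0 := ⟨le_refl _, by omega⟩
      rw [if_pos hcond]
      simp
    · have hne' : (valsF a i == valsF a j) = false := by
        apply beq_eq_false_iff_ne.mpr
        intro h
        exact hij2 (valsF_inj a hpos (le_of_lt hi) (le_of_lt hj) h)
      have hcond : ¬ (i ≤ j ∧ j < i + a.getD j 0) := by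
        intro ⟨h1, h2⟩
        apply hij
        refine ⟨?_, h2⟩
        rcases eq_or_lt_of_le h1 with rfl | h
        · exact absurd rfl hij2
        · exact h
      rw [if_neg hcond]
      simp [hne']

lemma count_build (hle : ∀ j, j < a.length → a.getD j 0 ≤ j + 1)
    {j : ℕ} (hj : j < a.length) :
    (build a).count (valsF a j) = a.getD j 0 := by
  unfold build
  rw [List.count_flatten, List.map_map]
  have hmap : (List.range a.length).map (List.count (valsF a j) ∘ col a)
      = (List.range a.length).map (fun i => if i ≤ j ∧ j < i + a.getD j 0 then 1 else 0) := by
    apply List.map_congr_left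
    intro i hi
    rw [List.mem_range] at hi
    exact count_col a hpos hi hj
  rw [hmap, list_sum_range]
  have hsc : ∑ i ∈ Finset.range a.length, (if i ≤ j ∧ j < i + a.getD j 0 then 1 else 0)
      = ((Finset.range a.length).filter (fun i => i ≤ j ∧ j < i + a.getD j 0)).card := by
    rw [Finset.card_filter]
  rw [hsc]
  have hfe : (Finset.range a.length).filter (fun i => i ≤ j ∧ j < i + a.getD j 0)
      = Finset.Ico (j + 1 - a.getD j 0) (j + 1) := by
    ext x
    simp only [Finset.mem_filter, Finset.mem_range, Finset.mem_Ico]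
    omega
  rw [hfe, Nat.card_Ico]
  have := hle j hj
  omega

lemma toFinset_build : (build a).toFinset = (Finset.range a.length).image (valsF a) := by
  ext x
  rw [List.mem_toFinset, mem_build a hpos, Finset.mem_image]
  constructor
  · rintro ⟨j, hj, rfl⟩; exact ⟨j, Finset.mem_range.mpr hj, rfl⟩
  · rintro ⟨j, hj, rfl⟩; exact ⟨j, Finset.mem_range.mp hj, rfl⟩

lemma sort_build :
    (build a).toFinset.sort (· ≤ ·) = (List.range a.length).map (valsF a) := by
  have hW : ((List.range a.length).map (valsF a)).Pairwise (· < ·) := by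
    rw [List.pairwise_iff_getElem]
    intro p q hp hq hpq
    simp only [List.getElem_map, List.getElem_range]
    rw [List.length_map, List.length_range] at hp hq
    exact valsF_lt a hpos (by simpa using hp) hpq
  have hnd : ((List.range a.length).map (valsF a)).Nodup :=
    hW.imp (fun h => ne_of_lt h)
  have hperm : ((build a).toFinset.sort (· ≤ ·)).Perm
      ((List.range a.length).map (valsF a)) := by
    apply (List.perm_ext_iff_of_nodup (Finset.sort_nodup _ _) hnd).mpr
    intro x
    rw [Finset.mem_sort, List.mem_toFinset, mem_build a hpos, List.mem_map]
    constructor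
    · rintro ⟨j, hj, rfl⟩; exact ⟨j, List.mem_range.mpr hj, rfl⟩
    · rintro ⟨j, hj, rfl⟩; exact ⟨j, List.mem_range.mp hj, rfl⟩
  exact List.Perm.eq_of_sortedLE (Finset.pairwise_sort _ _).sortedLE (hW.imp le_of_lt).sortedLE hperm

lemma reducedContent_build (hle : ∀ j, j < a.length → a.getD j 0 ≤ j + 1) :
    reducedContent (build a) = a := by
  unfold reducedContent
  rw [sort_build a hpos, List.map_map]
  have : (List.range a.length).map ((fun v => (build a).count v) ∘ valsF a)
      = (List.range a.length).map (fun j => a.getD j 0) := by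
    apply List.map_congr_left
    intro j hj
    rw [List.mem_range] at hj
    exact count_build a hpos hle hj
  rw [this, map_getD_range]

lemma flattenedStrict_build : FlattenedStrict (build a) := by
  apply flattenedStrict_flatten
  · intro B hB
    obtain ⟨i, hi, rfl⟩ := List.mem_map.mp hB
    rw [List.mem_range] at hi
    refine ⟨valsF a i, _, rfl, ?_⟩
    have hpair : (i :: (List.range a.length).filter
        (fun j => decide (i < j ∧ j < i + a.getD j 0))).Pairwise (· < ·) := by
      rw [List.pairwise_cons]
      constructor
      · intro j hj
        have := List.mem_filter.mp hj
        simpa using (by simpa using this.2 : i < j ∧ j < i + a.getD j 0).1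
      · exact List.Pairwise.sublist (List.filter_sublist) (List.pairwise_lt_range)
    have hmem : ∀ x ∈ (i :: (List.range a.length).filter
        (fun j => decide (i < j ∧ j < i + a.getD j 0))), x < a.length := by
      intro x hx
      rcases List.mem_cons.mp hx with rfl | hx
      · exact hi
      · have := (List.mem_filter.mp hx).1
        simpa using this
    have hpair2 : ((i :: (List.range a.length).filter
        (fun j => decide (i < j ∧ j < i + a.getD j 0))).map (valsF a)).Pairwise (· < ·) := by
      rw [List.pairwise_iff_getElem] at hpair ⊢
      intro p q hp hq hpq
      rw [List.length_map] at hp hq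
      simp only [List.getElem_map]
      apply valsF_lt a hpos
      · apply hmem
        exact List.getElem_mem _
      · exact hpair p q hp hq hpq
    have : List.Chain (· < ·) (valsF a i) (((List.range a.length).filter
        (fun j => decide (i < j ∧ j < i + a.getD j 0))).map (valsF a)) := by
      apply List.isChain_iff_pairwise.mpr
      simpa using hpair2
    exact List.Chain.imp (fun p q h => by simpa using h) this
  · have : (((List.range a.length).map (col a)).map List.headI)
        = (List.range a.length).map (valsF a) := by
      rw [List.map_map]
      apply List.map_congr_left
      intro i _
      rfl
    rw [this]; refine List.isChain_iff_pairwise.mpr ?_; rw [List.pairwise_iff_getElem]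
    intro p q hp hq hpq
    simp only [List.getElem_map, List.getElem_range]
    rw [List.length_map, List.length_range] at hp hq
    exact valsF_lt a hpos (by simpa using hp) hpq

end Build

lemma length_eq_sum_count (l : List ℕ) : ∑ x ∈ l.toFinset, l.count x = l.length := by
  simpa using Multiset.toFinset_sum_count_eq (l : Multiset ℕ)

lemma countP_eq_sum_count (p : ℕ → Bool) (l : List ℕ) :
    l.countP p = ∑ x ∈ l.toFinset, if p x = true then l.count x else 0 := by
  rw [List.countP_eq_length_filter, ← length_eq_sum_count]
  rw [Finset.sum_subset (fun x hx => List.mem_toFinset.mpr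
    (List.mem_of_mem_filter (List.mem_toFinset.mp hx)))]
  · apply Finset.sum_congr rfl
    intro x _
    by_cases hp : p x = true
    · rw [if_pos hp, List.count_filter hp]
    · rw [if_neg hp]
      apply List.count_eq_zero_of_not_mem
      intro hmem
      exact hp (List.of_mem_filter hmem)
  · intro x _ hx
    apply List.count_eq_zero_of_not_mem
    intro hmem
    exact hx (List.mem_toFinset.mpr hmem)

section Build2

variable (a : List ℕ) (hpos : ∀ j, j < a.length → 0 < a.getD j 0)

include hpos

lemma valsF_le_sum {j : ℕ} (hj : j < a.length) : valsF a j ≤ a.sum := by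
  unfold valsF
  have h1 : ∑ i ∈ Finset.range (j + 1), a.getD i 0 ≤ ∑ i ∈ Finset.range a.length, a.getD i 0 :=
    Finset.sum_le_sum_of_subset (Finset.range_subset_range.mpr (by omega))
  rw [Finset.sum_range_succ, sum_range_getD] at h1
  have := hpos j hj
  omega

lemma isFubini_build (hle : ∀ j, j < a.length → a.getD j 0 ≤ j + 1) :
    IsFubini a.sum (build a) := by
  have hinj : ∀ x ∈ Finset.range a.length, ∀ y ∈ Finset.range a.length,
      valsF a x = valsF a y → x = y := by
    intro x hx y hy h
    rw [Finset.mem_range] at hx hy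
    exact valsF_inj a hpos (le_of_lt hx) (le_of_lt hy) h
  refine ⟨?_, ?_, ?_⟩
  · rw [← length_eq_sum_count, toFinset_build a hpos, Finset.sum_image hinj]
    have : ∑ j ∈ Finset.range a.length, (build a).count (valsF a j)
        = ∑ j ∈ Finset.range a.length, a.getD j 0 := by
      apply Finset.sum_congr rfl
      intro j hj
      exact count_build a hpos hle (Finset.mem_range.mp hj)
    rw [this, sum_range_getD]
  · intro x hx
    obtain ⟨j, hj, rfl⟩ := (mem_build a hpos).mp hx
    exact ⟨by unfold valsF; omega, valsF_le_sum a hpos hj⟩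
  · intro v hv
    obtain ⟨j, hj, rfl⟩ := (mem_build a hpos).mp hv
    rw [countP_eq_sum_count, toFinset_build a hpos, Finset.sum_image hinj]
    have hc : ∑ j' ∈ Finset.range a.length,
        (if (decide (valsF a j' < valsF a j)) = true then (build a).count (valsF a j') else 0)
        = ∑ j' ∈ Finset.range a.length, (if j' < j then a.getD j' 0 else 0) := by
      apply Finset.sum_congr rfl
      intro j' hj'
      rw [Finset.mem_range] at hj'
      have hiff : valsF a j' < valsF a j ↔ j' < j :=
        valsF_lt_iff a hpos (le_of_lt hj') (le_of_lt hj)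
      by_cases h : j' < j
      · rw [if_pos (by simpa using hiff.mpr h), if_pos h]
        exact count_build a hpos hle hj'
      · rw [if_neg (by simpa using fun hh => h (hiff.mp hh)), if_neg h]
    rw [hc, ← Finset.sum_filter]
    have hfe : (Finset.range a.length).filter (fun j' => j' < j) = Finset.range j := by
      ext x
      simp only [Finset.mem_filter, Finset.mem_range]
      omega
    rw [hfe]
    unfold valsF
    omega

end Build2

theorem flat_runs_reducedContent_iff (n : ℕ) (a : List ℕ)
    (ha : ∀ x ∈ a, 0 < x) (hsum : a.sum = n) :
    (∃ l : List ℕ, IsFubini n l ∧ FlattenedStrict l ∧ reducedContent l = a) ↔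
      ∀ i (h : i < a.length), a[i] ≤ i + 1 := by
  constructor
  · rintro ⟨l, _, hflat, hrc⟩
    subst hrc
    exact forward_dir l hflat
  · intro h
    have hpos : ∀ j, j < a.length → 0 < a.getD j 0 := by
      intro j hj
      rw [List.getD_eq_getElem _ _ hj]
      exact ha _ (List.getElem_mem _)
    have hle : ∀ j, j < a.length → a.getD j 0 ≤ j + 1 := by
      intro j hj
      rw [List.getD_eq_getElem _ _ hj]
      exact h j hj
    exact ⟨build a, hsum ▸ isFubini_build a hpos hle,
      flattenedStrict_build a hpos, reducedContent_build a hpos hle⟩
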